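/- For every integer m ≥ 1, one has a₆(3m) = (−1)^m · r(3m), i.e. ∑_{d | 3m, d odd, d > 0} ξ(6m/d − d) = (−1)^m · r(3m). -/

import Mathlib

/-- `ξ m` for odd `m`, determined by the residue of `m` modulo 12. -/
def xi (m : ℤ) : ℤ :=
  if m % 12 = 1 ∨ m % 12 = 5 then -1
  else if m % 12 = 3 then -2
  else if m % 12 = 7 ∨ m % 12 = 11 then 1
  else if m % 12 = 9 then 2
  else 0

/-- `a₆ n = ∑ ξ(2n/d − d)` over odd positive divisors `d` of `n`. -/
def a6 (n : ℕ) : ℤ :=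
  ∑ d ∈ n.divisors.filter (fun d => Odd d), xi (2 * ((n : ℤ) / (d : ℤ)) - (d : ℤ))

/-- `r n` is the number of representations of `n` as a sum of two squares of integers. -/
noncomputable def r (n : ℕ) : ℕ := Set.ncard {p : ℤ × ℤ | p.1 ^ 2 + p.2 ^ 2 = (n : ℤ)}


open GaussianInt

local notation "ℤ[i]" => GaussianInt

set_option synthInstance.maxHeartbeats 1000000
set_option maxHeartbeats 1000000

def ichi (x : ℤ) : ℤ := if x % 4 = 1 then 1 else if x % 4 = 3 then -1 else 0

lemma negonepow (j : ℕ) : ((-1 : ℤ)) ^ j = 1 ↔ j % 2 = 0 := by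
  rcases Nat.even_or_odd j with h | h
  · simp [h.neg_one_pow, Nat.even_iff.mp h]
  · rw [h.neg_one_pow]; simp [Nat.odd_iff.mp h]

lemma negonepow' (j : ℕ) : ((-1 : ℤ)) ^ j = 1 ∨ ((-1 : ℤ)) ^ j = -1 := by
  rcases Nat.even_or_odd j with h | h
  · exact Or.inl h.neg_one_pow
  · exact Or.inr h.neg_one_pow

lemma xi_key (d k : ℕ) (hd : d % 2 = 1) (h3 : 3 ∣ d ∨ 3 ∣ k) :
    xi (2 * (k : ℤ) - (d : ℤ)) =
      (-1) ^ k * ichi (d : ℤ) +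
        (if 3 ∣ d ∧ 3 ∣ k then 3 * ((-1) ^ k * ichi ((d / 3 : ℕ) : ℤ)) else 0) := by
  by_cases h33 : 3 ∣ d ∧ 3 ∣ k
  · obtain ⟨⟨e, rfl⟩, ⟨f, rfl⟩⟩ := h33
    rw [if_pos ⟨⟨e, rfl⟩, ⟨f, rfl⟩⟩, Nat.mul_div_cancel_left e (by norm_num)]
    have hk2 := negonepow (3 * f)
    rcases negonepow' (3 * f) with hp | hp <;> rw [hp] <;> rw [hp] at hk2 <;>
      unfold xi ichi <;> split_ifs <;> push_cast <;> omega
  · rw [if_neg h33]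
    have hk2 := negonepow k
    rcases negonepow' k with hp | hp <;> rw [hp] <;> rw [hp] at hk2 <;>
      unfold xi ichi <;> split_ifs <;> push_cast <;> omega

lemma ichi_mul (a b : ℤ) : ichi (a * b) = ichi a * ichi b := by
  unfold ichi
  have h : a * b % 4 = a % 4 * (b % 4) % 4 := Int.mul_emod a b 4
  have ha : 0 ≤ a % 4 := Int.emod_nonneg a (by norm_num)
  have ha' : a % 4 < 4 := Int.emod_lt_of_pos a (by norm_num)
  have hb : 0 ≤ b % 4 := Int.emod_nonneg b (by norm_num)
  have hb' : b % 4 < 4 := Int.emod_lt_of_pos b (by norm_num)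
  interval_cases h1 : (a % 4) <;> interval_cases h2 : (b % 4) <;>
    simp_all <;> omega

noncomputable def Dfun (n : ℕ) : ℤ := ∑ d ∈ n.divisors, ichi (d : ℤ)

lemma divisors_mul_prime {p : ℕ} (hp : p.Prime) {k : ℕ} (hk : 0 < k) :
    (p * k).divisors = k.divisors ∪ k.divisors.image (p * ·) := by
  have hpk : p * k ≠ 0 := Nat.mul_ne_zero hp.pos.ne' hk.ne'
  ext d
  simp only [Nat.mem_divisors, Finset.mem_union, Finset.mem_image]
  constructor
  · rintro ⟨hdvd, -⟩
    by_cases h : d ∣ k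
    · exact Or.inl ⟨h, hk.ne'⟩
    · right
      have hd0 : 0 < d := Nat.pos_of_dvd_of_pos hdvd (Nat.pos_of_ne_zero hpk)
      set g := Nat.gcd d k with hg
      have hg0 : 0 < g := Nat.gcd_pos_of_pos_left k hd0
      have hgd : g ∣ d := Nat.gcd_dvd_left d k
      have hgk : g ∣ k := Nat.gcd_dvd_right d k
      have hco : Nat.Coprime (d / g) (k / g) := Nat.coprime_div_gcd_div_gcd hg0
      have hdvd' : d / g ∣ p * (k / g) := by
        obtain ⟨a, ha⟩ := hgd
        obtain ⟨b, hb⟩ := hgk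
        obtain ⟨c, hc⟩ := hdvd
        refine ⟨c, ?_⟩
        have h0 : g * (a * c) = g * (p * b) := by
          calc g * (a * c) = d * c := by rw [ha]; ring
            _ = p * k := hc.symm
            _ = g * (p * b) := by rw [hb]; ring
        have h1 : a * c = p * b := Nat.eq_of_mul_eq_mul_left hg0 h0
        rw [ha, hb, Nat.mul_div_cancel_left a hg0, Nat.mul_div_cancel_left b hg0]
        omega
      have hdp : d / g ∣ p := hco.dvd_of_dvd_mul_right hdvd'
      rcases (Nat.Prime.eq_one_or_self_of_dvd hp _ hdp) with h1 | h1
      · exfalso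
        apply h
        have : d = g := by
          have := Nat.div_mul_cancel hgd
          rw [h1, one_mul] at this; omega
        rw [this]; exact hgk
      · refine ⟨g, ⟨hgk, hk.ne'⟩, ?_⟩
        have := Nat.div_mul_cancel hgd
        rw [h1] at this
        omega
  · rintro (⟨h, -⟩ | ⟨a, ⟨ha, -⟩, rfl⟩)
    · exact ⟨h.mul_left p, hpk⟩
    · exact ⟨Nat.mul_dvd_mul_left p ha, hpk⟩

lemma divisors_inter_image {p : ℕ} (hp : p.Prime) {k : ℕ} (hk : 0 < k) :
    k.divisors ∩ k.divisors.image (p * ·)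
      = if p ∣ k then (k / p).divisors.image (p * ·) else ∅ := by
  ext d
  simp only [Finset.mem_inter, Finset.mem_image, Nat.mem_divisors]
  split_ifs with hpk
  · simp only [Finset.mem_image, Nat.mem_divisors]
    constructor
    · rintro ⟨⟨hdk, -⟩, a, ⟨hak, -⟩, rfl⟩
      have hkp : 0 < k / p := Nat.div_pos (Nat.le_of_dvd hk hpk) hp.pos
      exact ⟨a, ⟨(Nat.dvd_div_iff_mul_dvd hpk).mpr hdk, hkp.ne'⟩, rfl⟩
    · rintro ⟨a, ⟨hak, -⟩, rfl⟩
      have h1 : p * a ∣ k := (Nat.dvd_div_iff_mul_dvd hpk).mp hak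
      exact ⟨⟨h1, hk.ne'⟩, a, ⟨dvd_trans hak (Nat.div_dvd_of_dvd hpk), hk.ne'⟩, rfl⟩
  · simp only [Finset.notMem_empty, iff_false]
    rintro ⟨⟨hdk, -⟩, a, ⟨hak, -⟩, rfl⟩
    exact hpk (dvd_trans (Dvd.intro a rfl) hdk)

lemma Dfun_rec {p : ℕ} (hp : p.Prime) {k : ℕ} (hk : 0 < k) :
    Dfun (p * k) = (1 + ichi p) * Dfun k
      - ichi p * (if p ∣ k then Dfun (k / p) else 0) := by
  have himg : ∀ s : Finset ℕ, ∑ d ∈ s.image (p * ·), ichi (d : ℤ)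
      = ichi p * ∑ d ∈ s, ichi (d : ℤ) := by
    intro s
    rw [Finset.sum_image (fun a _ b _ h => Nat.eq_of_mul_eq_mul_left hp.pos h),
      Finset.mul_sum]
    refine Finset.sum_congr rfl fun d _ => ?_
    push_cast
    exact ichi_mul p d
  unfold Dfun
  rw [divisors_mul_prime hp hk]
  have h := Finset.sum_union_inter (s₁ := k.divisors) (s₂ := k.divisors.image (p * ·))
    (f := fun d => ichi (d : ℤ))
  rw [divisors_inter_image hp hk] at h
  split_ifs at h ⊢ with hpk
  · simp only [himg] at h
    linarith [h]
  · simp only [Finset.sum_empty, himg] at h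
    linarith [h]

def Rset (n : ℕ) : Set ℤ[i] := {z | Zsqrtd.norm z = (n : ℤ)}

lemma giEmb_injective : Function.Injective (fun p : ℤ × ℤ => (⟨p.1, p.2⟩ : ℤ[i])) := by
  rintro ⟨a, b⟩ ⟨c, d⟩ h
  simpa [Zsqrtd.ext_iff, Prod.ext_iff] using h

lemma image_pset (n : ℕ) :
    (fun p : ℤ × ℤ => (⟨p.1, p.2⟩ : ℤ[i])) '' {p : ℤ × ℤ | p.1 ^ 2 + p.2 ^ 2 = (n : ℤ)}
      = Rset n := by
  ext z
  constructor
  · rintro ⟨⟨x, y⟩, hxy, rfl⟩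
    simp only [Set.mem_setOf_eq] at hxy
    show Zsqrtd.norm _ = _
    simp only [Zsqrtd.norm]
    nlinarith [hxy]
  · intro hz
    refine ⟨(z.re, z.im), ?_, ?_⟩
    · have : Zsqrtd.norm z = (n : ℤ) := hz
      simp only [Zsqrtd.norm] at this
      simp only [Set.mem_setOf_eq]
      nlinarith [this]
    · rfl

lemma pset_finite (n : ℕ) : ({p : ℤ × ℤ | p.1 ^ 2 + p.2 ^ 2 = (n : ℤ)}).Finite := by
  apply Set.Finite.subset (Set.finite_Icc (α := ℤ × ℤ) (-(n : ℤ), -(n : ℤ)) ((n : ℤ), (n : ℤ)))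
  rintro ⟨x, y⟩ h
  simp only [Set.mem_setOf_eq] at h
  simp only [Set.mem_Icc, Prod.mk_le_mk]
  have h0 : (0 : ℤ) ≤ n := Int.natCast_nonneg n
  refine ⟨⟨?_, ?_⟩, ?_, ?_⟩ <;> nlinarith [sq_nonneg x, sq_nonneg y, sq_nonneg (x - 1),
    sq_nonneg (x + 1), sq_nonneg (y - 1), sq_nonneg (y + 1)]

lemma r_eq (n : ℕ) : r n = (Rset n).ncard := by
  rw [r, ← image_pset, Set.ncard_image_of_injective _ giEmb_injective]

lemma Rset_finite (n : ℕ) : (Rset n).Finite := by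
  rw [← image_pset]; exact (pset_finite n).image _

lemma ncard_mul_image (c : ℤ[i]) (hc : c ≠ 0) (s : Set ℤ[i]) :
    ((fun w => c * w) '' s).ncard = s.ncard :=
  Set.ncard_image_of_injective _ (mul_right_injective₀ hc)

lemma mul_conj_eq (z : ℤ[i]) (n : ℕ) (hz : z ∈ Rset n) : z * star z = (n : ℤ[i]) := by
  have h := (Zsqrtd.norm_eq_mul_conj z).symm
  rw [show Zsqrtd.norm z = ((n : ℕ) : ℤ) from hz] at h
  rw [h, Int.cast_natCast]

lemma star_dvd_star {u v : ℤ[i]} (h : u ∣ v) : star u ∣ star v := by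
  obtain ⟨c, rfl⟩ := h
  exact ⟨star c, by rw [star_mul']⟩

lemma gi_prime {z : ℤ[i]} {q : ℕ} (hq : q.Prime) (hz : Zsqrtd.norm z = (q : ℤ)) :
    Prime z := by
  rw [← irreducible_iff_prime]
  constructor
  · intro hu
    have h1 := Zsqrtd.norm_eq_one_iff.mpr hu
    rw [hz] at h1
    simp only [Int.natAbs_natCast] at h1
    exact hq.one_lt.ne' h1
  · intro a b hab
    have hnorm := congrArg Zsqrtd.norm hab
    rw [Zsqrtd.norm_mul, hz] at hnorm
    have h2 : q = a.norm.natAbs * b.norm.natAbs := by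
      have := congrArg Int.natAbs hnorm
      rwa [Int.natAbs_mul, Int.natAbs_natCast] at this
    rcases (Nat.Prime.eq_one_or_self_of_dvd hq a.norm.natAbs ⟨_, h2⟩) with h3 | h3
    · exact Or.inl (Zsqrtd.norm_eq_one_iff.mp h3)
    · right
      apply Zsqrtd.norm_eq_one_iff.mp
      have hq0 : q ≠ 0 := hq.pos.ne'
      have : q * 1 = q * b.norm.natAbs := by
        rw [mul_one]; conv_lhs => rw [h2, h3]
      exact (Nat.eq_of_mul_eq_mul_left hq.pos this).symm

lemma r_rec_three {p : ℕ} (hp : p.Prime) (hp3 : p % 4 = 3) {k : ℕ} (hk : 0 < k) :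
    r (p * k) = if p ∣ k then r (k / p) else 0 := by
  haveI : Fact p.Prime := ⟨hp⟩
  have hprime : Prime ((p : ℕ) : ℤ[i]) := prime_of_nat_prime_of_mod_four_eq_three p hp3
  have hp0 : ((p : ℕ) : ℤ[i]) ≠ 0 := by
    intro h
    have := congrArg Zsqrtd.norm h
    rw [Zsqrtd.norm_natCast] at this
    simp at this
    exact hp.pos.ne' this
  have hdvd : ∀ z ∈ Rset (p * k), ((p : ℕ) : ℤ[i]) ∣ z := by
    intro z hz
    have h1 : ((p : ℕ) : ℤ[i]) ∣ z * star z := by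
      rw [mul_conj_eq z _ hz]
      push_cast
      exact dvd_mul_right _ _
    rcases hprime.2.2 z (star z) h1 with h | h
    · exact h
    · have := star_dvd_star h
      rwa [star_star, star_natCast] at this
  by_cases hpk : p ∣ k
  · rw [if_pos hpk]
    obtain ⟨k', rfl⟩ := hpk
    have hk' : 0 < k' := Nat.pos_of_ne_zero fun h => by subst h; simp at hk
    have himg : Rset (p * (p * k')) = ((fun w => ((p : ℕ) : ℤ[i]) * w) '' Rset k') := by
      ext z
      constructor
      · intro hz
        obtain ⟨w, rfl⟩ := hdvd z hz
        refine ⟨w, ?_, rfl⟩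
        have h2 : Zsqrtd.norm (((p : ℕ) : ℤ[i]) * w) = ((p * (p * k') : ℕ) : ℤ) := hz
        rw [Zsqrtd.norm_mul, Zsqrtd.norm_natCast] at h2
        have h3 : ((p : ℤ)) * ((p : ℤ) * Zsqrtd.norm w) = (p : ℤ) * ((p : ℤ) * (k' : ℤ)) := by
          push_cast at h2 ⊢
          linarith [h2]
        have h4 := mul_left_cancel₀ (by exact_mod_cast hp.pos.ne' : (p : ℤ) ≠ 0) h3
        have h5 := mul_left_cancel₀ (by exact_mod_cast hp.pos.ne' : (p : ℤ) ≠ 0) h4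
        exact h5
      · rintro ⟨w, hw, rfl⟩
        show Zsqrtd.norm _ = _
        rw [Zsqrtd.norm_mul, Zsqrtd.norm_natCast, show Zsqrtd.norm w = (k' : ℤ) from hw]
        push_cast
        ring
    rw [r_eq, r_eq, himg, ncard_mul_image _ hp0]
    congr 1
    rw [Nat.mul_div_cancel_left k' hp.pos]
  · rw [if_neg hpk]
    have hempty : Rset (p * k) = ∅ := by
      rw [Set.eq_empty_iff_forall_notMem]
      intro z hz
      obtain ⟨w, rfl⟩ := hdvd z hz
      have h2 : Zsqrtd.norm (((p : ℕ) : ℤ[i]) * w) = ((p * k : ℕ) : ℤ) := hz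
      rw [Zsqrtd.norm_mul, Zsqrtd.norm_natCast] at h2
      apply hpk
      have h3 : (p : ℤ) ∣ (k : ℤ) := by
        refine ⟨Zsqrtd.norm w, ?_⟩
        have : (p : ℤ) * ((p : ℤ) * Zsqrtd.norm w) = (p : ℤ) * (k : ℤ) := by
          push_cast at h2 ⊢; linarith [h2]
        exact (mul_left_cancel₀ (by exact_mod_cast hp.pos.ne' : (p : ℤ) ≠ 0) this).symm
      exact_mod_cast h3
    rw [r_eq, hempty, Set.ncard_empty]

lemma norm_one_one : Zsqrtd.norm (⟨1, 1⟩ : ℤ[i]) = 2 := by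
  simp [Zsqrtd.norm]

lemma r_two {k : ℕ} (hk : 0 < k) : r (2 * k) = r k := by
  have h110 : (⟨1, 1⟩ : ℤ[i]) ≠ 0 := by
    intro h
    have := congrArg Zsqrtd.norm h
    rw [norm_one_one] at this
    simp [Zsqrtd.norm] at this
  have himg : Rset (2 * k) = ((fun w => (⟨1, 1⟩ : ℤ[i]) * w) '' Rset k) := by
    ext z
    constructor
    · intro hz
      have hzn : z.re * z.re + z.im * z.im = 2 * (k : ℤ) := by
        have h : Zsqrtd.norm z = ((2 * k : ℕ) : ℤ) := hz
        simp only [Zsqrtd.norm] at h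
        push_cast at h
        linarith [h]
      set x := z.re with hxdef
      set y := z.im with hydef
      have hpar : x % 2 = y % 2 := by
        rcases Int.emod_two_eq x with hx | hx <;> rcases Int.emod_two_eq y with hy | hy
        · rw [hx, hy]
        · exfalso
          have h1 : (x * x + y * y) % 2 = 1 := by
            rw [Int.add_emod, Int.mul_emod x x, Int.mul_emod y y, hx, hy]
            decide
          rw [hzn] at h1
          omega
        · exfalso
          have h1 : (x * x + y * y) % 2 = 1 := by
            rw [Int.add_emod, Int.mul_emod x x, Int.mul_emod y y, hx, hy]
            decide
          rw [hzn] at h1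
          omega
        · rw [hx, hy]
      obtain ⟨u, hu⟩ : (2 : ℤ) ∣ (x + y) := by omega
      obtain ⟨v, hv⟩ : (2 : ℤ) ∣ (y - x) := by omega
      refine ⟨⟨u, v⟩, ?_, ?_⟩
      · show Zsqrtd.norm _ = _
        simp only [Zsqrtd.norm]
        have h1 : (x + y) * (x + y) = 4 * (u * u) := by rw [hu]; ring
        have h2 : (y - x) * (y - x) = 4 * (v * v) := by rw [hv]; ring
        push_cast
        nlinarith [hzn, h1, h2]
      · rw [Zsqrtd.ext_iff]
        constructor
        · simp only [Zsqrtd.re_mul]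
          omega
        · simp only [Zsqrtd.im_mul]
          omega
    · rintro ⟨w, hw, rfl⟩
      show Zsqrtd.norm _ = _
      rw [Zsqrtd.norm_mul, norm_one_one, show Zsqrtd.norm w = (k : ℤ) from hw]
      push_cast
      ring
  rw [r_eq, r_eq, himg, ncard_mul_image _ h110]

lemma r_one : r 1 = 4 := by
  have hset : {p : ℤ × ℤ | p.1 ^ 2 + p.2 ^ 2 = ((1 : ℕ) : ℤ)} =
      ((({((1 : ℤ), (0 : ℤ)), (-1, 0), (0, 1), (0, -1)} : Finset (ℤ × ℤ))) : Set (ℤ × ℤ)) := by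
    ext ⟨x, y⟩
    simp only [Set.mem_setOf_eq, Finset.coe_insert, Set.mem_insert_iff, Finset.coe_singleton,
      Set.mem_singleton_iff, Prod.mk.injEq]
    constructor
    · intro h
      push_cast at h
      have hx1 : x ≤ 1 := by nlinarith [sq_nonneg y]
      have hx2 : -1 ≤ x := by nlinarith [sq_nonneg y]
      have hy1 : y ≤ 1 := by nlinarith [sq_nonneg x]
      have hy2 : -1 ≤ y := by nlinarith [sq_nonneg x]
      interval_cases x <;> interval_cases y <;> norm_num at h <;> tauto
    · rintro (⟨rfl, rfl⟩ | ⟨rfl, rfl⟩ | ⟨rfl, rfl⟩ | ⟨rfl, rfl⟩) <;> norm_num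
  rw [r, hset, Set.ncard_coe_finset]
  decide

lemma norm_cancel {q : ℕ} (hq : 0 < q) {w : ℤ[i]} {t : ℕ}
    (h : (q : ℤ) * Zsqrtd.norm w = ((q * t : ℕ) : ℤ)) : Zsqrtd.norm w = (t : ℤ) := by
  push_cast at h
  exact mul_left_cancel₀ (by exact_mod_cast hq.ne' : (q : ℤ) ≠ 0) h

lemma pi_not_dvd_conj {q : ℕ} (hq : q.Prime) (hodd : q % 2 = 1) {a b : ℤ}
    (hab : a * a + b * b = (q : ℤ)) : ¬ ((⟨a, b⟩ : ℤ[i]) ∣ (⟨a, -b⟩ : ℤ[i])) := by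
  intro hdvd
  have hsum : (⟨a, b⟩ : ℤ[i]) ∣ (⟨2 * a, 0⟩ : ℤ[i]) := by
    have he : (⟨2 * a, 0⟩ : ℤ[i]) = ⟨a, b⟩ + ⟨a, -b⟩ := by
      rw [Zsqrtd.ext_iff]
      constructor <;> simp [Zsqrtd.re_add, Zsqrtd.im_add] <;> ring
    rw [he]
    exact dvd_add dvd_rfl hdvd
  have hdiff : (⟨a, b⟩ : ℤ[i]) ∣ (⟨2 * b, 0⟩ : ℤ[i]) := by
    have he : (⟨2 * b, 0⟩ : ℤ[i]) = ⟨0, -1⟩ * (⟨a, b⟩ - ⟨a, -b⟩) := by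
      rw [Zsqrtd.ext_iff]
      constructor <;>
        simp [Zsqrtd.re_mul, Zsqrtd.im_mul, Zsqrtd.re_sub, Zsqrtd.im_sub] <;> ring
    rw [he]
    exact Dvd.dvd.mul_left (dvd_sub dvd_rfl hdvd) _
  have hco : IsCoprime a b := by
    rw [Int.isCoprime_iff_gcd_eq_one]
    by_contra hg
    have hga : ((Int.gcd a b : ℕ) : ℤ) ∣ a := Int.gcd_dvd_left a b
    have hgb : ((Int.gcd a b : ℕ) : ℤ) ∣ b := Int.gcd_dvd_right a b
    have hgq : ((Int.gcd a b * Int.gcd a b : ℕ) : ℤ) ∣ (q : ℤ) := by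
      rw [← hab]
      push_cast
      exact dvd_add (mul_dvd_mul hga hga) (mul_dvd_mul hgb hgb)
    have hgq' : Int.gcd a b * Int.gcd a b ∣ q := by exact_mod_cast hgq
    rcases hq.eq_one_or_self_of_dvd _ hgq' with h | h
    · exact hg (by nlinarith [Nat.le_of_eq h] : Int.gcd a b = 1)
    · have hgdvd : Int.gcd a b ∣ q := ⟨_, h.symm⟩
      rcases hq.eq_one_or_self_of_dvd _ hgdvd with h1 | h1
      · exact hg h1
      · rw [h1] at h
        have := hq.two_le
        nlinarith [h]
  obtain ⟨u, v, huv⟩ := hco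
  have h2 : (⟨a, b⟩ : ℤ[i]) ∣ (⟨2, 0⟩ : ℤ[i]) := by
    have he : (⟨2, 0⟩ : ℤ[i]) = ⟨u, 0⟩ * ⟨2 * a, 0⟩ + ⟨v, 0⟩ * ⟨2 * b, 0⟩ := by
      rw [Zsqrtd.ext_iff]
      constructor <;>
        simp [Zsqrtd.re_mul, Zsqrtd.im_mul, Zsqrtd.re_add, Zsqrtd.im_add] <;> linarith [huv]
    rw [he]
    exact dvd_add (hsum.mul_left _) (hdiff.mul_left _)
  obtain ⟨c, hc⟩ := h2
  have hn := congrArg Zsqrtd.norm hc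
  rw [Zsqrtd.norm_mul] at hn
  have hn2 : Zsqrtd.norm (⟨2, 0⟩ : ℤ[i]) = 4 := by simp [Zsqrtd.norm]
  have hnab : Zsqrtd.norm (⟨a, b⟩ : ℤ[i]) = (q : ℤ) := by
    simp only [Zsqrtd.norm]
    linarith [hab]
  rw [hn2, hnab] at hn
  have hq4 : (q : ℤ) ∣ 4 := ⟨_, hn⟩
  have hq4' : q ∣ 4 := by exact_mod_cast hq4
  have hle : q ≤ 4 := Nat.le_of_dvd (by norm_num) hq4'
  have h2q := hq.two_le
  interval_cases q <;> omega

lemma r_rec_one {p : ℕ} (hp : p.Prime) (hp1 : p % 4 = 1) {k : ℕ} (hk : 0 < k) :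
    r (p * k) + (if p ∣ k then r (k / p) else 0) = 2 * r k := by
  haveI : Fact p.Prime := ⟨hp⟩
  obtain ⟨a, b, hab⟩ := Nat.Prime.sq_add_sq (p := p) (by omega)
  have hab' : (a : ℤ) * a + (b : ℤ) * b = (p : ℤ) := by
    have := congrArg (Nat.cast : ℕ → ℤ) hab
    push_cast at this
    nlinarith [this]
  set π : ℤ[i] := ⟨(a : ℤ), (b : ℤ)⟩ with hπdef
  set π' : ℤ[i] := ⟨(a : ℤ), -(b : ℤ)⟩ with hπ'def
  have hnπ : Zsqrtd.norm π = (p : ℤ) := by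
    simp only [Zsqrtd.norm, hπdef]
    linarith [hab']
  have hnπ' : Zsqrtd.norm π' = (p : ℤ) := by
    simp only [Zsqrtd.norm, hπ'def]
    nlinarith [hab']
  have hπp : Prime π := gi_prime hp hnπ
  have hπ'p : Prime π' := gi_prime hp hnπ'
  have hππ' : π * π' = ((p : ℕ) : ℤ[i]) := by
    rw [Zsqrtd.ext_iff]
    constructor
    · simp only [Zsqrtd.re_mul, Zsqrtd.re_natCast, hπdef, hπ'def]
      linarith [hab']
    · simp only [Zsqrtd.im_mul, Zsqrtd.im_natCast, hπdef, hπ'def]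
      ring
  have hpodd : p % 2 = 1 := by omega
  have hnd : ¬ π ∣ π' := pi_not_dvd_conj hp hpodd hab'
  have hsπ : star π = π' := by
    rw [Zsqrtd.ext_iff]
    simp [Zsqrtd.re_star, Zsqrtd.im_star, hπdef, hπ'def]
  have hsπ' : star π' = π := by
    rw [Zsqrtd.ext_iff]
    simp [Zsqrtd.re_star, Zsqrtd.im_star, hπdef, hπ'def]
  have hnd' : ¬ π' ∣ π := by
    intro h
    have h2 := star_dvd_star h
    rw [hsπ, hsπ'] at h2
    exact hnd h2
  have hπ0 : π ≠ 0 := hπp.ne_zero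
  have hπ'0 : π' ≠ 0 := hπ'p.ne_zero
  have hpZ : (p : ℤ) ≠ 0 := by exact_mod_cast hp.pos.ne'
  have hp0 : ((p : ℕ) : ℤ[i]) ≠ 0 := by rw [← hππ']; exact mul_ne_zero hπ0 hπ'0
  set A := (fun w => π * w) '' Rset k with hA
  set B := (fun w => π' * w) '' Rset k with hB
  have hAfin : A.Finite := (Rset_finite k).image _
  have hBfin : B.Finite := (Rset_finite k).image _
  have hAsub : A ⊆ Rset (p * k) := by
    rintro z ⟨w, hw, rfl⟩
    show Zsqrtd.norm _ = _
    rw [Zsqrtd.norm_mul, hnπ, show Zsqrtd.norm w = (k : ℤ) from hw]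
    push_cast
    ring
  have hBsub : B ⊆ Rset (p * k) := by
    rintro z ⟨w, hw, rfl⟩
    show Zsqrtd.norm _ = _
    rw [Zsqrtd.norm_mul, hnπ', show Zsqrtd.norm w = (k : ℤ) from hw]
    push_cast
    ring
  have hcover : Rset (p * k) = A ∪ B := by
    apply Set.Subset.antisymm _ (Set.union_subset hAsub hBsub)
    intro z hz
    have h1 : π ∣ z * star z := by
      rw [mul_conj_eq z _ hz]
      push_cast
      exact Dvd.dvd.mul_right (⟨π', hππ'.symm⟩ : π ∣ ((p:ℕ) : ℤ[i])) _
    rcases hπp.2.2 _ _ h1 with h | h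
    · obtain ⟨w, rfl⟩ := h
      left
      refine ⟨w, ?_, rfl⟩
      have h2 : Zsqrtd.norm (π * w) = ((p * k : ℕ) : ℤ) := hz
      rw [Zsqrtd.norm_mul, hnπ] at h2
      exact norm_cancel hp.pos h2
    · have h2 := star_dvd_star h
      rw [star_star, hsπ] at h2
      obtain ⟨w, rfl⟩ := h2
      right
      refine ⟨w, ?_, rfl⟩
      have h2 : Zsqrtd.norm (π' * w) = ((p * k : ℕ) : ℤ) := hz
      rw [Zsqrtd.norm_mul, hnπ'] at h2
      exact norm_cancel hp.pos h2
  have hcount := Set.ncard_union_add_ncard_inter A B hAfin hBfin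
  rw [← hcover] at hcount
  have hcA : A.ncard = r k := by rw [hA, ncard_mul_image _ hπ0, r_eq]
  have hcB : B.ncard = r k := by rw [hB, ncard_mul_image _ hπ'0, r_eq]
  by_cases hpk : p ∣ k
  · obtain ⟨k', rfl⟩ := hpk
    have hk' : 0 < k' := Nat.pos_of_ne_zero fun h => by subst h; simp at hk
    have hinter : A ∩ B = (fun w => ((p : ℕ) : ℤ[i]) * w) '' Rset k' := by
      ext z
      constructor
      · rintro ⟨⟨w, hw, rfl⟩, ⟨w', hw', heq⟩⟩
        have h3 : π' ∣ π * w := ⟨w', heq.symm⟩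
        rcases hπ'p.2.2 _ _ h3 with h | h
        · exact absurd h hnd'
        · obtain ⟨v, rfl⟩ := h
          refine ⟨v, ?_, ?_⟩
          · have h4 : Zsqrtd.norm (π' * v) = ((p * k' : ℕ) : ℤ) := hw
            rw [Zsqrtd.norm_mul, hnπ'] at h4
            show Zsqrtd.norm v = _
            exact norm_cancel hp.pos h4
          · show ((p : ℕ) : ℤ[i]) * v = π * (π' * v)
            rw [← hππ']
            ring
      · rintro ⟨v, hv, rfl⟩
        constructor
        · refine ⟨π' * v, ?_, ?_⟩
          · show Zsqrtd.norm _ = _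
            rw [Zsqrtd.norm_mul, hnπ', show Zsqrtd.norm v = (k' : ℤ) from hv]
            push_cast
            ring
          · show π * (π' * v) = ((p : ℕ) : ℤ[i]) * v
            rw [← hππ']
            ring
        · refine ⟨π * v, ?_, ?_⟩
          · show Zsqrtd.norm _ = _
            rw [Zsqrtd.norm_mul, hnπ, show Zsqrtd.norm v = (k' : ℤ) from hv]
            push_cast
            ring
          · show π' * (π * v) = ((p : ℕ) : ℤ[i]) * v
            rw [← hππ']
            ring
    rw [hinter, ncard_mul_image _ hp0, ← r_eq, ← r_eq] at hcount
    rw [if_pos (Dvd.intro k' rfl), Nat.mul_div_cancel_left k' hp.pos]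
    rw [hcA, hcB] at hcount
    omega
  · have hinter : A ∩ B = ∅ := by
      rw [Set.eq_empty_iff_forall_notMem]
      rintro z ⟨⟨w, hw, rfl⟩, ⟨w', hw', heq⟩⟩
      have h3 : π' ∣ π * w := ⟨w', heq.symm⟩
      rcases hπ'p.2.2 _ _ h3 with h | h
      · exact absurd h hnd'
      · obtain ⟨v, rfl⟩ := h
        apply hpk
        have h4 : Zsqrtd.norm (π' * v) = (k : ℤ) := hw
        rw [Zsqrtd.norm_mul, hnπ'] at h4
        have h5 : (p : ℤ) ∣ (k : ℤ) := ⟨_, h4.symm⟩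
        exact_mod_cast h5
    rw [hinter, Set.ncard_empty, ← r_eq] at hcount
    rw [if_neg hpk]
    rw [hcA, hcB] at hcount
    omega

lemma r_rec {p : ℕ} (hp : p.Prime) {k : ℕ} (hk : 0 < k) :
    (r (p * k) : ℤ) = (1 + ichi p) * (r k : ℤ)
      - ichi p * (if p ∣ k then (r (k / p) : ℤ) else 0) := by
  rcases hp.eq_two_or_odd with hp2 | hpo
  · subst hp2
    have hc : ichi ((2 : ℕ) : ℤ) = 0 := by norm_num [ichi]
    rw [hc, r_two hk]
    ring
  · have hp41 : p % 4 = 1 ∨ p % 4 = 3 := by omega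
    rcases hp41 with hp4 | hp4
    · have hc : ichi ((p : ℕ) : ℤ) = 1 := by
        unfold ichi
        rw [if_pos (by omega : ((p : ℕ) : ℤ) % 4 = 1)]
      rw [hc]
      have h := r_rec_one hp hp4 hk
      by_cases hpk : p ∣ k
      · rw [if_pos hpk] at h ⊢
        push_cast at h ⊢
        linarith [h]
      · rw [if_neg hpk] at h ⊢
        push_cast at h ⊢
        linarith [h]
    · have hc : ichi ((p : ℕ) : ℤ) = -1 := by
        unfold ichi
        rw [if_neg (by omega : ¬ ((p : ℕ) : ℤ) % 4 = 1),
          if_pos (by omega : ((p : ℕ) : ℤ) % 4 = 3)]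
      rw [hc]
      have h := r_rec_three hp hp4 hk
      by_cases hpk : p ∣ k
      · rw [if_pos hpk] at h ⊢
        push_cast at h ⊢
        linarith [h]
      · rw [if_neg hpk] at h ⊢
        push_cast at h ⊢
        linarith [h]


lemma Dfun_one : Dfun 1 = 1 := by
  unfold Dfun
  rw [Nat.divisors_one]
  simp [ichi]

lemma jacobi : ∀ n : ℕ, 0 < n → (r n : ℤ) = 4 * Dfun n := by
  intro n
  induction n using Nat.strong_induction_on with
  | _ n ih =>
    intro hn
    rcases eq_or_lt_of_le (show 1 ≤ n from hn) with h1 | h1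
    · rw [← h1, r_one, Dfun_one]
      norm_num
    · set p := n.minFac with hpdef
      have hp : p.Prime := Nat.minFac_prime (by omega)
      obtain ⟨k, hk⟩ := n.minFac_dvd
      have hk0 : 0 < k := by
        rcases Nat.eq_zero_or_pos k with rfl | h
        · omega
        · exact h
      have hkn : k < n := by
        rw [hk]
        have := hp.two_le
        nlinarith
      rw [hk, r_rec hp hk0, Dfun_rec hp hk0, ih k hkn hk0]
      by_cases hpk : p ∣ k
      · rw [if_pos hpk, if_pos hpk,
          ih (k / p) (lt_of_le_of_lt (Nat.div_le_self _ _) hkn)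
            (Nat.div_pos (Nat.le_of_dvd hk0 hpk) hp.pos)]
        ring
      · rw [if_neg hpk, if_neg hpk]
        ring

lemma Dfun_odd_filter (n : ℕ) :
    ∑ d ∈ n.divisors.filter (fun d => Odd d), ichi (d : ℤ) = Dfun n := by
  apply Finset.sum_filter_of_ne
  intro d _ hne
  rw [Nat.odd_iff]
  by_contra h
  apply hne
  unfold ichi
  rw [if_neg (by omega), if_neg (by omega)]

theorem a6_three_mul (m : ℕ) (hm : 1 ≤ m) :
    a6 (3 * m) = (-1) ^ m * (r (3 * m) : ℤ) := by
  have hn0 : (3 * m : ℕ) ≠ 0 := by omega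
  have hstep : a6 (3 * m) =
      ∑ d ∈ (3 * m).divisors.filter (fun d => Odd d),
        ((-1 : ℤ) ^ m * ichi (d : ℤ)
          + (if 3 ∣ d ∧ 3 ∣ ((3 * m) / d) then
              3 * ((-1 : ℤ) ^ m * ichi (((d / 3 : ℕ)) : ℤ)) else 0)) := by
    unfold a6
    apply Finset.sum_congr rfl
    intro d hd
    simp only [Finset.mem_filter, Nat.mem_divisors] at hd
    obtain ⟨⟨hdvd, -⟩, hodd⟩ := hd
    rw [← Int.natCast_div]
    have h3 : 3 ∣ d ∨ 3 ∣ ((3 * m) / d) := by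
      refine (Nat.Prime.dvd_mul Nat.prime_three).mp ?_
      rw [Nat.mul_div_cancel' hdvd]
      exact ⟨m, rfl⟩
    rw [xi_key d ((3 * m) / d) (Nat.odd_iff.mp hodd) h3]
    have hpar : ((-1 : ℤ)) ^ ((3 * m) / d) = (-1 : ℤ) ^ m := by
      have heq : Even ((3 * m) / d) ↔ Even m := by
        have h2 : d * ((3 * m) / d) = 3 * m := Nat.mul_div_cancel' hdvd
        constructor
        · intro h
          have : Even (3 * m) := by
            rw [← h2]
            exact h.mul_left d
          rcases (Nat.even_mul.mp this) with h3 | h3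
          · exact absurd h3 (by decide)
          · exact h3
        · intro h
          have h4 : Even (d * ((3 * m) / d)) := by
            rw [h2]
            exact h.mul_left 3
          rcases Nat.even_mul.mp h4 with h5 | h5
          · exact absurd h5 (Nat.not_even_iff_odd.mpr hodd)
          · exact h5
      rcases Nat.even_or_odd m with h | h
      · rw [h.neg_one_pow, (heq.mpr h).neg_one_pow]
      · rw [h.neg_one_pow, (Nat.not_even_iff_odd.mp (fun hc => (Nat.not_even_iff_odd.mpr h) (heq.mp hc))).neg_one_pow]
    rw [hpar]
  rw [hstep, Finset.sum_add_distrib, ← Finset.mul_sum, Dfun_odd_filter]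
  have h2 : ∑ d ∈ (3 * m).divisors.filter (fun d => Odd d),
      (if 3 ∣ d ∧ 3 ∣ ((3 * m) / d) then
          3 * ((-1 : ℤ) ^ m * ichi (((d / 3 : ℕ)) : ℤ)) else 0)
      = (if 3 ∣ m then 3 * ((-1 : ℤ) ^ m * Dfun (m / 3)) else 0) := by
    by_cases h3m : 3 ∣ m
    · rw [if_pos h3m]
      obtain ⟨m', rfl⟩ := h3m
      rw [Nat.mul_div_cancel_left m' (by norm_num)]
      rw [← Finset.sum_filter]
      have hm'0 : m' ≠ 0 := by omega
      have hbij :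
          ∑ a ∈ ((3 * (3 * m')).divisors.filter (fun d => Odd d)).filter
              (fun a => 3 ∣ a ∧ 3 ∣ 3 * (3 * m') / a),
            3 * ((-1 : ℤ) ^ (3 * m') * ichi ((a / 3 : ℕ) : ℤ))
          = ∑ d ∈ m'.divisors.filter (fun d => Odd d),
            3 * ((-1 : ℤ) ^ (3 * m') * ichi ((d : ℕ) : ℤ)) := by
        apply Finset.sum_nbij' (fun d => d / 3) (fun d => 3 * d)
        · intro a ha
          simp only [Finset.mem_filter, Nat.mem_divisors] at ha ⊢
          obtain ⟨⟨⟨hdvd9, -⟩, hodd⟩, h3a, h3q⟩ := ha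
          obtain ⟨a', rfl⟩ := h3a
          rw [Nat.mul_div_cancel_left a' (by norm_num)]
          have hodd' : Odd a' := by
            rw [Nat.odd_iff] at hodd ⊢
            omega
          have ha3 : a' ∣ 3 * m' := by
            have := (mul_dvd_mul_iff_left (by norm_num : (3:ℕ) ≠ 0)).mp hdvd9
            exact this
          rw [Nat.mul_div_mul_left _ _ (by norm_num : 0 < 3)] at h3q
          obtain ⟨c, hc⟩ := h3q
          have h5 := Nat.div_mul_cancel ha3
          rw [hc] at h5
          have hcc : c * a' = m' := by
            have : 3 * (c * a') = 3 * m' := by linarith [h5]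
            omega
          exact ⟨⟨Dvd.intro_left c hcc, hm'0⟩, hodd'⟩
        · intro d' hd'
          simp only [Finset.mem_filter, Nat.mem_divisors] at hd' ⊢
          obtain ⟨⟨hdvd, -⟩, hodd⟩ := hd'
          refine ⟨⟨⟨?_, by omega⟩, ?_⟩, ⟨d', rfl⟩, ?_⟩
          · exact Nat.mul_dvd_mul_left 3 (hdvd.trans ⟨3, mul_comm 3 m'⟩)
          · exact (by decide : Odd 3).mul hodd
          · rw [Nat.mul_div_mul_left _ _ (by norm_num : 0 < 3),
              Nat.mul_div_assoc 3 hdvd]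
            exact ⟨m' / d', rfl⟩
        · intro a ha
          simp only [Finset.mem_filter] at ha
          exact Nat.mul_div_cancel' ha.2.1
        · intro d' _
          exact Nat.mul_div_cancel_left d' (by norm_num)
        · intro a _
          rfl
      rw [hbij, ← Dfun_odd_filter m']
      simp only [Finset.mul_sum]
    · rw [if_neg h3m]
      apply Finset.sum_eq_zero
      intro d hd
      rw [if_neg]
      rintro ⟨⟨d', rfl⟩, h3nd⟩
      simp only [Finset.mem_filter, Nat.mem_divisors] at hd
      obtain ⟨⟨hdvd, -⟩, -⟩ := hd
      obtain ⟨c, hc⟩ := h3nd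
      apply h3m
      have h5 := Nat.div_mul_cancel hdvd
      rw [hc] at h5
      refine ⟨c * d', ?_⟩
      nlinarith [h5]
  rw [h2]
  have hD := Dfun_rec Nat.prime_three (k := m) (by omega)
  have hichi3 : ichi ((3 : ℕ) : ℤ) = -1 := by norm_num [ichi]
  rw [hichi3] at hD
  have hJ := jacobi (3 * m) (by omega)
  by_cases h3m : 3 ∣ m
  · rw [if_pos h3m] at hD ⊢
    have hDeq : Dfun (3 * m) = Dfun (m / 3) := by linarith [hD]
    rw [hDeq] at hJ
    rw [hDeq, hJ]
    ring
  · rw [if_neg h3m] at hD ⊢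
    have hDeq : Dfun (3 * m) = 0 := by linarith [hD]
    rw [hDeq] at hJ
    rw [hDeq, hJ]
    ring
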